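/- Let A ∈ ℂ^{m×m} be Hermitian and B ∈ ℂ^{m×n}. There exists a Hermitian matrix X ∈ ℂ^{n×n} with BXB* ⪰ A (i.e., BXB* − A positive semidefinite) if and only if E_B A E_B ⪯ 0 and rank(E_B A E_B) = rank(E_B A), where E_B = I_m − BB†. -/

import Mathlib

set_option maxHeartbeats 1000000

open Matrix
open scoped ComplexOrder

def IsMoorePenrose {m n : Type*} [Fintype m] [Fintype n]
    (A : Matrix m n ℂ) (X : Matrix n m ℂ) : Prop :=
  A * X * A = A ∧ X * A * X = X ∧ (A * X)ᴴ = A * X ∧ (X * A)ᴴ = X * A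

open Classical in
noncomputable def pinv {m n : Type*} [Fintype m] [Fintype n]
    (A : Matrix m n ℂ) : Matrix n m ℂ :=
  if h : ∃ X, IsMoorePenrose A X then h.choose else 0

section helperLemmas

variable {a b c : Type*} [Fintype a] [Fintype b] [Fintype c]

omit [Fintype a] in
lemma range_mulVecLin_neg (M : Matrix a b ℂ) :
    LinearMap.range (-M).mulVecLin = LinearMap.range M.mulVecLin := by
  ext x
  simp only [LinearMap.mem_range, mulVecLin_apply]
  constructor
  · rintro ⟨v, rfl⟩; exact ⟨-v, by simp [neg_mulVec, mulVec_neg]⟩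
  · rintro ⟨v, rfl⟩; exact ⟨-v, by simp [neg_mulVec, mulVec_neg]⟩

omit [Fintype a] in
lemma rank_neg (M : Matrix a b ℂ) : (-M).rank = M.rank := by
  unfold Matrix.rank
  rw [range_mulVecLin_neg]

lemma range_mulVecLin_conjTranspose_mul_self (N : Matrix a b ℂ) :
    LinearMap.range (Nᴴ * N).mulVecLin = LinearMap.range Nᴴ.mulVecLin := by
  apply Submodule.eq_of_le_of_finrank_le
  · rw [mulVecLin_mul]
    exact LinearMap.range_comp_le_range _ _
  · have h1 : (Nᴴ * N).rank = Nᴴ.rank := by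
      rw [rank_conjTranspose_mul_self, rank_conjTranspose]
    exact h1.ge

omit [Fintype c] in
lemma rank_mul_conjTranspose_mul (M : Matrix c b ℂ) (N : Matrix a b ℂ) :
    (M * (Nᴴ * N)).rank = (M * Nᴴ).rank := by
  unfold Matrix.rank
  conv_lhs => rw [mulVecLin_mul, LinearMap.range_comp, range_mulVecLin_conjTranspose_mul_self,
    ← LinearMap.range_comp, ← mulVecLin_mul]

end helperLemmas

lemma exists_isMoorePenrose {m n : Type*} [Fintype m] [Fintype n] [DecidableEq n]
    (B : Matrix m n ℂ) : ∃ X, IsMoorePenrose B X := by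
  have hH : (Bᴴ * B).IsHermitian := (posSemidef_conjTranspose_mul_self B).1
  obtain ⟨U, hUeq⟩ : ∃ U', U' = (hH.eigenvectorUnitary : Matrix n n ℂ) := ⟨_, rfl⟩
  obtain ⟨d, hdeq⟩ : ∃ d', d' = hH.eigenvalues := ⟨_, rfl⟩
  obtain ⟨D, hDeq⟩ : ∃ D', D' = diagonal (fun i => ((d i : ℝ) : ℂ)) := ⟨_, rfl⟩
  obtain ⟨Dp, hDpeq⟩ : ∃ D', D' = diagonal (fun i => (((d i)⁻¹ : ℝ) : ℂ)) := ⟨_, rfl⟩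
  have hU1 : Uᴴ * U = 1 := by
    rw [hUeq, ← star_eq_conjTranspose]
    exact mem_unitaryGroup_iff'.mp hH.eigenvectorUnitary.2
  have hspec : Bᴴ * B = U * D * Uᴴ := by
    rw [hUeq, hDeq, hdeq, ← star_eq_conjTranspose]
    convert hH.spectral_theorem using 2
    rw [Unitary.conjStarAlgAut_apply]; rfl
  have hUU : ∀ X : Matrix n n ℂ, Uᴴ * (U * X) = X := fun X => by
    rw [← Matrix.mul_assoc, hU1, Matrix.one_mul]
  have hDDpD : ∀ X : Matrix n n ℂ, D * (Dp * (D * X)) = D * X := by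
    intro X
    rw [← Matrix.mul_assoc, ← Matrix.mul_assoc, hDeq, hDpeq, diagonal_mul_diagonal,
      diagonal_mul_diagonal]
    congr 1
    refine congrArg diagonal (funext fun i => ?_)
    rcases eq_or_ne (d i) 0 with h | h
    · simp [h]
    · push_cast
      field_simp
  have hDpDDp : ∀ X : Matrix n n ℂ, Dp * (D * (Dp * X)) = Dp * X := by
    intro X
    rw [← Matrix.mul_assoc, ← Matrix.mul_assoc, hDeq, hDpeq, diagonal_mul_diagonal,
      diagonal_mul_diagonal]
    congr 1
    refine congrArg diagonal (funext fun i => ?_)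
    rcases eq_or_ne (d i) 0 with h | h
    · simp [h]
    · push_cast
      field_simp
  have hDpherm : Dpᴴ = Dp := by
    rw [hDpeq, diagonal_conjTranspose]
    refine congrArg diagonal (funext fun i => ?_)
    simp [Pi.star_apply, Complex.star_def, Complex.conj_ofReal]
  have hDpDherm : (Dp * D)ᴴ = Dp * D := by
    rw [hDpeq, hDeq, diagonal_mul_diagonal, diagonal_conjTranspose]
    refine congrArg diagonal (funext fun i => ?_)
    simp [Pi.star_apply, Complex.star_def, ← Complex.ofReal_mul, Complex.conj_ofReal]
  obtain ⟨G, hGeq⟩ : ∃ G', G' = U * Dp * Uᴴ := ⟨_, rfl⟩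
  have hGherm : Gᴴ = G := by
    rw [hGeq]
    calc (U * Dp * Uᴴ)ᴴ = U * Dpᴴ * Uᴴ := by
          simp only [conjTranspose_mul, conjTranspose_conjTranspose, Matrix.mul_assoc]
    _ = U * Dp * Uᴴ := by rw [hDpherm]
  have hGH : G * (Bᴴ * B) = U * (Dp * D) * Uᴴ := by
    rw [hGeq, hspec]
    simp only [Matrix.mul_assoc, hUU]
  have hHGH : (Bᴴ * B) * G * (Bᴴ * B) = Bᴴ * B := by
    rw [hGeq, hspec]
    simp only [Matrix.mul_assoc, hUU, hDDpD]
  have hGHG : G * (Bᴴ * B) * G = G := by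
    rw [hGeq, hspec]
    simp only [Matrix.mul_assoc, hUU, hDpDDp]
  have hGHherm : (G * (Bᴴ * B))ᴴ = G * (Bᴴ * B) := by
    rw [hGH]
    calc (U * (Dp * D) * Uᴴ)ᴴ = U * (Dp * D)ᴴ * Uᴴ := by
          simp only [conjTranspose_mul, conjTranspose_conjTranspose, Matrix.mul_assoc]
    _ = U * (Dp * D) * Uᴴ := by rw [hDpDherm]
  have hBGH : B * (G * (Bᴴ * B)) = B := by
    have h0 : (Bᴴ * B) * (G * (Bᴴ * B) - 1) = 0 := by
      rw [Matrix.mul_sub, Matrix.mul_one, ← Matrix.mul_assoc, hHGH, sub_self]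
    have := (conjTranspose_mul_self_mul_eq_zero B (G * (Bᴴ * B) - 1)).mp h0
    rw [Matrix.mul_sub, Matrix.mul_one, sub_eq_zero] at this
    exact this
  refine ⟨G * Bᴴ, ?_, ?_, ?_, ?_⟩
  · calc B * (G * Bᴴ) * B = B * (G * (Bᴴ * B)) := by simp only [Matrix.mul_assoc]
    _ = B := hBGH
  · calc G * Bᴴ * B * (G * Bᴴ) = (G * (Bᴴ * B) * G) * Bᴴ := by simp only [Matrix.mul_assoc]
    _ = G * Bᴴ := by rw [hGHG]
  · rw [← Matrix.mul_assoc, conjTranspose_mul, conjTranspose_mul,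
      conjTranspose_conjTranspose, hGherm, Matrix.mul_assoc]
  · calc (G * Bᴴ * B)ᴴ = (G * (Bᴴ * B))ᴴ := by rw [Matrix.mul_assoc]
    _ = G * (Bᴴ * B) := hGHherm
    _ = G * Bᴴ * B := by rw [Matrix.mul_assoc]

lemma pinv_isMoorePenrose {m n : Type*} [Fintype m] [Fintype n] [DecidableEq n]
    (B : Matrix m n ℂ) : IsMoorePenrose B (pinv B) := by
  have hex : ∃ X, IsMoorePenrose B X := exists_isMoorePenrose B
  rw [pinv, dif_pos hex]
  exact hex.choose_spec

theorem lmi_solvability {m n : ℕ} (A : Matrix (Fin m) (Fin m) ℂ)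
    (B : Matrix (Fin m) (Fin n) ℂ) (hA : A.IsHermitian) :
    (∃ X : Matrix (Fin n) (Fin n) ℂ, X.IsHermitian ∧ (B * X * Bᴴ - A).PosSemidef) ↔
      ((-((1 - B * pinv B) * A * (1 - B * pinv B))).PosSemidef ∧
        ((1 - B * pinv B) * A * (1 - B * pinv B)).rank = ((1 - B * pinv B) * A).rank) := by
  obtain ⟨Bp, hBp⟩ : ∃ X, X = pinv B := ⟨_, rfl⟩
  have hBmp : IsMoorePenrose B Bp := hBp ▸ pinv_isMoorePenrose B
  rw [← hBp]
  obtain ⟨hB1, hB2, hB3, hB4⟩ := hBmp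
  obtain ⟨P, hPeq⟩ : ∃ P', P' = B * Bp := ⟨_, rfl⟩
  rw [← hPeq]
  obtain ⟨E, hEeq⟩ : ∃ E', E' = 1 - P := ⟨_, rfl⟩
  rw [← hEeq]
  have hPH : Pᴴ = P := by rw [hPeq]; exact hB3
  have hPB : P * B = B := by rw [hPeq]; exact hB1
  have hPP : P * P = P := by
    rw [hPeq, ← Matrix.mul_assoc, hB1]
  have hBpB : Bpᴴ * Bᴴ = P := by
    rw [← conjTranspose_mul, ← hPeq, hPH]
  have hEH : Eᴴ = E := by
    rw [hEeq, conjTranspose_sub, conjTranspose_one, hPH]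
  have hEB : E * B = 0 := by
    rw [hEeq, Matrix.sub_mul, Matrix.one_mul, hPB, sub_self]
  have hPE1 : P + E = 1 := by rw [hEeq]; exact add_sub_cancel _ _
  constructor
  · rintro ⟨X, hXH, hPSD⟩
    obtain ⟨P0, hP0eq⟩ : ∃ Q, Q = B * X * Bᴴ - A := ⟨_, rfl⟩
    have hPSD' : P0.PosSemidef := hP0eq ▸ hPSD
    have hAeq : A = B * X * Bᴴ - P0 := by rw [hP0eq, sub_sub_cancel]
    have h0 : E * (B * X * Bᴴ) = 0 := by
      rw [← Matrix.mul_assoc, ← Matrix.mul_assoc, hEB, Matrix.zero_mul, Matrix.zero_mul]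
    have hEA : E * A = -(E * P0) := by
      rw [hAeq, Matrix.mul_sub, h0, zero_sub]
    have hEAE : E * A * E = -(E * P0 * E) := by rw [hEA, Matrix.neg_mul]
    obtain ⟨S, hSeq⟩ : ∃ S', S' = (open MatrixOrder in CFC.sqrt P0) := ⟨_, rfl⟩
    have hS2 : S * S = P0 := by rw [hSeq]; open MatrixOrder in exact CFC.sqrt_mul_sqrt_self P0 hPSD'.nonneg
    have hSH : Sᴴ = S := by rw [hSeq]; open MatrixOrder in exact (CFC.sqrt_nonneg P0).posSemidef.1
    refine ⟨?_, ?_⟩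
    · rw [hEAE, neg_neg]
      have := hPSD'.mul_mul_conjTranspose_same E
      rwa [hEH] at this
    · have e1 : E * A * E = -((S * E)ᴴ * (S * E)) := by
        rw [hEAE]
        congr 1
        rw [conjTranspose_mul, hSH, hEH, ← hS2]
        simp only [Matrix.mul_assoc]
      have h' : E * (Sᴴ * S) = E * P0 := by rw [hSH, hS2]
      have e2 : E * A = -(E * (Sᴴ * S)) := by rw [hEA, h']
      rw [e1, e2, rank_neg, rank_neg, rank_conjTranspose_mul_self,
        rank_mul_conjTranspose_mul]
      rw [show E * Sᴴ = (S * E)ᴴ from by rw [conjTranspose_mul, hEH], rank_conjTranspose]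
  · rintro ⟨h1, h2⟩
    obtain ⟨D', hD'eq⟩ : ∃ Q, Q = -(E * A * E) := ⟨_, rfl⟩
    have h1' : D'.PosSemidef := hD'eq ▸ h1
    have hD'H : D'ᴴ = D' := h1'.1
    obtain ⟨G', hG'1, hG'2, hG'3, hG'4⟩ := exists_isMoorePenrose D'
    have hDG'D : D' * G'ᴴ * D' = D' := by
      have hc := congrArg conjTranspose hG'1
      rw [conjTranspose_mul, conjTranspose_mul, hD'H] at hc
      rwa [← Matrix.mul_assoc] at hc
    obtain ⟨Gs, hGseq⟩ : ∃ Q, Q = (2 : ℂ)⁻¹ • (G' + G'ᴴ) := ⟨_, rfl⟩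
    have hGsH : Gsᴴ = Gs := by
      rw [hGseq, conjTranspose_smul, conjTranspose_add, conjTranspose_conjTranspose,
        add_comm]
      congr 1
      simp
    have hDGsD : D' * Gs * D' = D' := by
      rw [hGseq, Matrix.mul_smul, Matrix.smul_mul, Matrix.mul_add, Matrix.add_mul,
        hG'1, hDG'D, ← two_smul ℂ, smul_smul]
      norm_num
    -- range inclusion and factorization
    have h2' := h2
    unfold Matrix.rank at h2'
    have heq : LinearMap.range (E * A * E).mulVecLin = LinearMap.range (E * A).mulVecLin := by
      apply Submodule.eq_of_le_of_finrank_le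
      · rw [mulVecLin_mul]
        exact LinearMap.range_comp_le_range _ _
      · exact h2'.ge
    have hrange : LinearMap.range (E * A * P).mulVecLin ≤ LinearMap.range D'.mulVecLin := by
      have hle1 : LinearMap.range (E * A * P).mulVecLin
          ≤ LinearMap.range (E * A).mulVecLin := by
        rw [mulVecLin_mul]
        exact LinearMap.range_comp_le_range _ _
      have hD'r : LinearMap.range D'.mulVecLin = LinearMap.range (E * A * E).mulVecLin := by
        rw [hD'eq, range_mulVecLin_neg]
      rw [hD'r, heq]
      exact hle1
    have hYex : ∃ Y : Matrix (Fin m) (Fin m) ℂ, D' * Y = E * A * P := by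
      have hcol : ∀ j, ∃ y, D' *ᵥ y = fun i => (E * A * P) i j := by
        intro j
        have hmem : (fun i => (E * A * P) i j) ∈ LinearMap.range (E * A * P).mulVecLin := by
          refine ⟨Pi.single j 1, ?_⟩
          rw [mulVecLin_apply, mulVec_single]
          funext i
          simp
        obtain ⟨y, hy⟩ := hrange hmem
        exact ⟨y, hy⟩
      choose Yc hYc using hcol
      refine ⟨Matrix.of (fun i j => Yc j i), ?_⟩
      ext i j
      have := congr_fun (hYc j) i
      simpa [Matrix.mul_apply, Matrix.mulVec, dotProduct] using this
    obtain ⟨Y, hY⟩ := hYex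
    have hCc : (P * A * E)ᴴ = E * A * P := by
      rw [conjTranspose_mul, conjTranspose_mul, hEH, hPH, hA.eq, ← Matrix.mul_assoc]
    have hC : P * A * E = (E * A * P)ᴴ := by rw [← hCc, conjTranspose_conjTranspose]
    have hCY : P * A * E = Yᴴ * D' := by rw [hC, ← hY, conjTranspose_mul, hD'H]
    have hCGD : P * A * E * Gs * D' = P * A * E := by
      rw [hCY]
      calc Yᴴ * D' * Gs * D' = Yᴴ * (D' * Gs * D') := by simp only [Matrix.mul_assoc]
      _ = Yᴴ * D' := by rw [hDGsD]
    have hDGC : D' * (Gs * (E * A * P)) = E * A * P := by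
      rw [← hY]
      calc D' * (Gs * (D' * Y)) = (D' * Gs * D') * Y := by simp only [Matrix.mul_assoc]
      _ = D' * Y := by rw [hDGsD]
    obtain ⟨M, hMeq⟩ : ∃ Q, Q = P * A * P + P * A * E * Gs * (E * A * P) := ⟨_, rfl⟩
    refine ⟨Bp * M * Bpᴴ, ?_, ?_⟩
    · show (Bp * M * Bpᴴ)ᴴ = Bp * M * Bpᴴ
      have hMH : Mᴴ = M := by
        rw [hMeq, conjTranspose_add]
        simp only [conjTranspose_mul, Matrix.mul_assoc, hGsH, hPH, hEH, hA.eq]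
      rw [conjTranspose_mul, conjTranspose_mul, conjTranspose_conjTranspose, hMH,
        Matrix.mul_assoc]
    · have hBXB : B * (Bp * M * Bpᴴ) * Bᴴ = P * M * P := by
        calc B * (Bp * M * Bpᴴ) * Bᴴ = B * (Bp * (M * (Bpᴴ * Bᴴ))) := by
              simp only [Matrix.mul_assoc]
        _ = P * M * P := by rw [hBpB, ← Matrix.mul_assoc, ← Matrix.mul_assoc, ← hPeq]
      have hPMP : P * M * P = M := by
        rw [hMeq, Matrix.mul_add, Matrix.add_mul]
        congr 1
        · calc P * (P * A * P) * P = P * P * A * (P * P) := by simp only [Matrix.mul_assoc]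
          _ = P * A * P := by rw [hPP]
        · calc P * (P * A * E * Gs * (E * A * P)) * P
              = P * P * (A * (E * (Gs * (E * (A * (P * P)))))) := by
                simp only [Matrix.mul_assoc]
          _ = P * (A * (E * (Gs * (E * (A * P))))) := by rw [hPP]
          _ = P * A * E * Gs * (E * A * P) := by simp only [Matrix.mul_assoc]
      have hA4 : A = P * A * P + P * A * E + E * A * P + E * A * E := by
        calc A = (P + E) * A * (P + E) := by rw [hPE1, Matrix.one_mul, Matrix.mul_one]
        _ = P * A * P + P * A * E + E * A * P + E * A * E := by
              rw [Matrix.add_mul, Matrix.add_mul, Matrix.mul_add, Matrix.mul_add]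
              abel
      have hMA : B * (Bp * M * Bpᴴ) * Bᴴ - A
          = -(E * A * E) - P * A * E - E * A * P + P * A * E * Gs * (E * A * P) := by
        rw [hBXB, hPMP, hMeq]
        nth_rewrite 4 [hA4]
        abel
      have hWD : (1 - P * A * E * Gs) * D' * (1 - P * A * E * Gs)ᴴ
          = -(E * A * E) - P * A * E - E * A * P + P * A * E * Gs * (E * A * P) := by
        have hWH : (1 - P * A * E * Gs)ᴴ = 1 - Gs * (E * A * P) := by
          rw [conjTranspose_sub, conjTranspose_one, conjTranspose_mul, hGsH, hCc]
        rw [hWH, Matrix.mul_sub, Matrix.mul_one, Matrix.sub_mul, Matrix.one_mul, hCGD,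
          Matrix.sub_mul, hDGC, hD'eq]
        simp only [Matrix.mul_assoc]
        abel
      rw [hMA, ← hWD]
      exact h1'.mul_mul_conjTranspose_same _
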